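/- Let D be a non-trivial (v,k,λ)-symmetric design with λ < k, and let A be the adjacency matrix over ℝ of the flag-graph Γ₁(D). Then the characteristic polynomial of A equals (X − (2k−2)) · (X − (k−2+√(k−λ)))^{v−1} · (X − (k−2−√(k−λ)))^{v−1} · (X + 2)^{vk−2v+1}, where √(k−λ) denotes the real square root of k−λ. -/

import Mathlib

/-- A `(v,b,r,k,lam)`-balanced incomplete block design: a finite set of `v` points and a
family of `b` distinct blocks, each block a `k`-element subset of the points with
`1 < k < v`, such that every point lies in exactly `r` blocks and every pair of distinct
points is contained in exactly `lam` blocks (all parameters positive). -/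
structure BIBD (v b r k lam : ℕ) where
  P : Type
  [fintypeP : Fintype P]
  [decEqP : DecidableEq P]
  blocks : Finset (Finset P)
  card_points : Fintype.card P = v
  card_blocks : blocks.card = b
  block_size : ∀ c ∈ blocks, c.card = k
  one_lt_k : 1 < k
  k_lt_v : k < v
  lam_pos : 0 < lam
  point_deg : ∀ p : P, (blocks.filter (fun c => p ∈ c)).card = r
  pair_deg : ∀ p q : P, p ≠ q → (blocks.filter (fun c => p ∈ c ∧ q ∈ c)).card = lam

attribute [instance] BIBD.fintypeP BIBD.decEqP

variable {v b r k lam : ℕ}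

/-- A flag of a BIBD: an incident point-block pair `(p, c)` with `p ∈ c`. -/
def BIBD.Flag (D : BIBD v b r k lam) : Type :=
  {pc : D.P × Finset D.P // pc.2 ∈ D.blocks ∧ pc.1 ∈ pc.2}

instance (D : BIBD v b r k lam) : Fintype D.Flag :=
  inferInstanceAs (Fintype {pc : D.P × Finset D.P // pc.2 ∈ D.blocks ∧ pc.1 ∈ pc.2})

instance (D : BIBD v b r k lam) : DecidableEq D.Flag :=
  inferInstanceAs (DecidableEq {pc : D.P × Finset D.P // pc.2 ∈ D.blocks ∧ pc.1 ∈ pc.2})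

/-- The flag-graph `Γ₁(D)`: vertices are the flags of `D`; two distinct flags `(p,c)` and
`(q,d)` are adjacent iff `p = q` or `c = d`. -/
def BIBD.Gamma1 (D : BIBD v b r k lam) : SimpleGraph D.Flag where
  Adj x y := x ≠ y ∧ (x.1.1 = y.1.1 ∨ x.1.2 = y.1.2)
  symm := ⟨fun _ _ h => ⟨h.1.symm, h.2.imp Eq.symm Eq.symm⟩⟩
  loopless := ⟨fun _ h => h.1 rfl⟩

instance (D : BIBD v b r k lam) : DecidableRel D.Gamma1.Adj :=
  fun x y => inferInstanceAs (Decidable (x ≠ y ∧ (x.1.1 = y.1.1 ∨ x.1.2 = y.1.2)))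

-- sum over flags
lemma BIBD.flag_sum (D : BIBD v b r k lam) {M : Type} [AddCommMonoid M]
    (f : D.P → Finset D.P → M) :
    ∑ x : D.Flag, f x.1.1 x.1.2
      = ∑ p : D.P, ∑ c ∈ D.blocks, if p ∈ c then f p c else 0 := by
  classical
  have h : ∀ pc : D.P × Finset D.P,
      pc ∈ (Finset.univ ×ˢ D.blocks).filter (fun pc => pc.1 ∈ pc.2)
        ↔ (pc.2 ∈ D.blocks ∧ pc.1 ∈ pc.2) := by
    intro pc
    simp [Finset.mem_filter, Finset.mem_product, and_comm]
  have := Finset.sum_subtype (F := inferInstanceAs (Fintype D.Flag))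
    ((Finset.univ ×ˢ D.blocks).filter (fun pc => pc.1 ∈ pc.2)) h
    (fun pc => f pc.1 pc.2)
  have h2 : ∑ x : D.Flag, f x.1.1 x.1.2
      = ∑ a ∈ (Finset.univ ×ˢ D.blocks).filter (fun pc => pc.1 ∈ pc.2), f a.1 a.2 := this.symm
  rw [h2, Finset.sum_filter, Finset.sum_product]

lemma BIBD.card_flag (D : BIBD v b r k lam) : Fintype.card D.Flag = v * r := by
  classical
  have h1 : Fintype.card D.Flag = ∑ _x : D.Flag, 1 := by simp
  rw [h1, D.flag_sum (fun _ _ => 1)]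
  have h2 : ∀ p : D.P, (∑ c ∈ D.blocks, if p ∈ c then 1 else 0) = r := by
    intro p
    rw [← Finset.sum_filter, Finset.sum_const, D.point_deg p, smul_eq_mul, mul_one]
  rw [Finset.sum_congr rfl (fun p _ => h2 p), Finset.sum_const, smul_eq_mul,
    Finset.card_univ, D.card_points]

lemma BIBD.symmetric_count (D : BIBD v b k k lam) :
    lam * (v - 1) = k * (k - 1) := by
  classical
  have hv : 0 < v := lt_trans (lt_trans Nat.zero_lt_one D.one_lt_k) D.k_lt_v
  have hp : Nonempty D.P := by
    rw [← Fintype.card_pos_iff, D.card_points]; exact hv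
  obtain ⟨p⟩ := hp
  set F := D.blocks.filter (fun c => p ∈ c) with hF
  have hFcard : F.card = k := D.point_deg p
  have hone : ∀ c ∈ F, c.card - 1 = k - 1 := by
    intro c hc
    rw [D.block_size c (Finset.mem_filter.mp hc).1]
  have hside1 : ∑ c ∈ F, (c.card - 1) = k * (k - 1) := by
    rw [Finset.sum_congr rfl hone, Finset.sum_const, hFcard, smul_eq_mul]
  have hside2 : ∑ c ∈ F, (c.card - 1) = (v - 1) * lam := by
    have he : ∀ c ∈ F, c.card - 1 = (c.erase p).card := by
      intro c hc
      rw [Finset.card_erase_of_mem (Finset.mem_filter.mp hc).2]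
    rw [Finset.sum_congr rfl he]
    have hcf : ∀ c : Finset D.P, (c.erase p).card
        = ∑ q : D.P, if q ∈ c.erase p then 1 else 0 := by
      intro c
      rw [← Finset.sum_filter, Finset.sum_const, smul_eq_mul, mul_one,
        Finset.filter_univ_mem]
    rw [Finset.sum_congr rfl (fun c _ => hcf c), Finset.sum_comm]
    have hq : ∀ q : D.P, (∑ c ∈ F, if q ∈ c.erase p then 1 else 0)
        = if q = p then 0 else lam := by
      intro q
      by_cases hqp : q = p
      · subst hqp; simp
      · rw [if_neg hqp, ← Finset.sum_filter, Finset.sum_const, smul_eq_mul, mul_one]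
        have : F.filter (fun c => q ∈ c.erase p)
            = D.blocks.filter (fun c => p ∈ c ∧ q ∈ c) := by
          rw [hF, Finset.filter_filter]
          apply Finset.filter_congr
          intro c _
          simp [Finset.mem_erase, hqp]
        rw [this, D.pair_deg p q (Ne.symm hqp)]
    rw [Finset.sum_congr rfl (fun q _ => hq q)]
    rw [← Finset.add_sum_erase _ _ (Finset.mem_univ p), if_pos rfl, zero_add]
    have : ∀ q ∈ Finset.univ.erase p, (if q = p then 0 else lam) = lam := by
      intro q hq; rw [if_neg (Finset.mem_erase.mp hq).1]
    rw [Finset.sum_congr rfl this, Finset.sum_const, smul_eq_mul,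
      Finset.card_erase_of_mem (Finset.mem_univ p), Finset.card_univ, D.card_points]
  rw [hside1] at hside2
  rw [mul_comm lam (v-1)]
  exact hside2.symm

section Matrices
open Matrix Polynomial

variable (R : Type) [Field R]

/-- indicator sum helper -/
lemma sum_ind_left {α : Type*} [Fintype α] [DecidableEq α] (a b : α) :
    ∑ p : α, (if a = p then (1:R) else 0) * (if b = p then 1 else 0)
      = if a = b then 1 else 0 := by
  simp only [ite_mul, one_mul, zero_mul, Finset.sum_ite_eq, Finset.mem_univ, if_true]
  by_cases h : a = b <;> simp [h, eq_comm]

lemma sum_ind_right {α : Type*} [Fintype α] [DecidableEq α] (a b : α) :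
    ∑ p : α, (if p = a then (1:R) else 0) * (if p = b then 1 else 0)
      = if a = b then 1 else 0 := by
  simp only [ite_mul, one_mul, zero_mul, Finset.sum_ite_eq', Finset.mem_univ, if_true]

/-- The flag–(point ⊕ block) incidence matrix. -/
def BIBD.M (D : BIBD v b r k lam) :
    Matrix D.Flag (D.P ⊕ {c : Finset D.P // c ∈ D.blocks}) R :=
  Matrix.of fun x j => Sum.elim (fun p => if x.1.1 = p then (1:R) else 0)
    (fun c => if x.1.2 = c.1 then 1 else 0) j

/-- The point–block incidence matrix. -/
def BIBD.N (D : BIBD v b r k lam) :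
    Matrix D.P {c : Finset D.P // c ∈ D.blocks} R :=
  Matrix.of fun p c => if p ∈ c.1 then (1:R) else 0

lemma BIBD.M_mul_Mt_apply (D : BIBD v b r k lam) (x y : D.Flag) :
    (D.M R * (D.M R)ᵀ) x y
      = (if x.1.1 = y.1.1 then 1 else 0) + (if x.1.2 = y.1.2 then 1 else 0) := by
  classical
  rw [Matrix.mul_apply]
  rw [Fintype.sum_sum_type]
  congr 1
  · exact sum_ind_left R x.1.1 y.1.1
  · have h1 : ∑ c : {c : Finset D.P // c ∈ D.blocks},
        (if x.1.2 = c.1 then (1:R) else 0) * (if y.1.2 = c.1 then 1 else 0)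
        = ∑ c ∈ D.blocks, (if x.1.2 = c then (1:R) else 0) * (if y.1.2 = c then 1 else 0) :=
      (Finset.sum_subtype (p := fun c => c ∈ D.blocks) D.blocks (fun _ => Iff.rfl)
        (fun c => (if x.1.2 = c then (1:R) else 0) * (if y.1.2 = c then 1 else 0))).symm
    simp only [Matrix.transpose_apply, BIBD.M, Matrix.of_apply, Sum.elim_inr]
    rw [h1]
    simp only [ite_mul, one_mul, zero_mul, Finset.sum_ite_eq, x.2.1, if_true]
    by_cases h : x.1.2 = y.1.2 <;> simp [h, eq_comm]

lemma BIBD.Mt_mul_M (D : BIBD v v k k lam) :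
    (D.M R)ᵀ * D.M R
      = Matrix.fromBlocks ((k:R) • 1) (D.N R) (D.N R)ᵀ ((k:R) • 1) := by
  classical
  ext j i
  rw [Matrix.mul_apply]
  simp only [Matrix.transpose_apply]
  rcases j with p | c <;> rcases i with q | d
  · -- (inl p, inl q)
    have : ∀ x : D.Flag, D.M R x (Sum.inl p) * D.M R x (Sum.inl q)
        = (if x.1.1 = p then (1:R) else 0) * (if x.1.1 = q then 1 else 0) := fun _ => rfl
    rw [Finset.sum_congr rfl (fun x _ => this x),
      D.flag_sum (fun p' c' => (if p' = p then (1:R) else 0) * (if p' = q then 1 else 0))]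
    have hinner : ∀ p' : D.P, (∑ c' ∈ D.blocks,
        if p' ∈ c' then (if p' = p then (1:R) else 0) * (if p' = q then 1 else 0) else 0)
        = (k:R) * ((if p' = p then (1:R) else 0) * (if p' = q then 1 else 0)) := by
      intro p'
      rw [← Finset.sum_filter, Finset.sum_const, D.point_deg p', nsmul_eq_mul]
    rw [Finset.sum_congr rfl (fun p' _ => hinner p'), ← Finset.mul_sum, sum_ind_right R p q]
    simp [Matrix.fromBlocks, Matrix.one_apply, mul_ite, mul_one, mul_zero]
  · -- (inl p, inr d)
    have : ∀ x : D.Flag, D.M R x (Sum.inl p) * D.M R x (Sum.inr d)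
        = (if x.1.1 = p then (1:R) else 0) * (if x.1.2 = d.1 then 1 else 0) := fun _ => rfl
    rw [Finset.sum_congr rfl (fun x _ => this x),
      D.flag_sum (fun p' c' => (if p' = p then (1:R) else 0) * (if c' = d.1 then 1 else 0))]
    have hinner : ∀ p' : D.P, (∑ c' ∈ D.blocks,
        if p' ∈ c' then (if p' = p then (1:R) else 0) * (if c' = d.1 then 1 else 0) else 0)
        = (if p' = p then (1:R) else 0) * (if p' ∈ d.1 then 1 else 0) := by
      intro p'
      have hsw : ∀ c' ∈ D.blocks,
          (if p' ∈ c' then (if p' = p then (1:R) else 0) * (if c' = d.1 then 1 else 0) else 0)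
          = (if c' = d.1 then (if p' = p then (1:R) else 0) * (if p' ∈ c' then 1 else 0)
              else 0) := by
        intro c' _
        split_ifs <;> ring
      rw [Finset.sum_congr rfl hsw, Finset.sum_ite_eq' D.blocks d.1, if_pos d.2]
    rw [Finset.sum_congr rfl (fun p' _ => hinner p')]
    have h2 : ∀ p' : D.P, (if p' = p then (1:R) else 0) * (if p' ∈ d.1 then 1 else 0)
        = if p' = p then (if p' ∈ d.1 then (1:R) else 0) else 0 := by
      intro p'; split_ifs <;> ring
    rw [Finset.sum_congr rfl (fun p' _ => h2 p'), Finset.sum_ite_eq' Finset.univ p,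
      if_pos (Finset.mem_univ p)]
    simp [Matrix.fromBlocks, BIBD.N]
  · -- (inr c, inl q)
    have : ∀ x : D.Flag, D.M R x (Sum.inr c) * D.M R x (Sum.inl q)
        = (if x.1.1 = q then (1:R) else 0) * (if x.1.2 = c.1 then 1 else 0) := by
      intro x; simp only [BIBD.M, Matrix.of_apply, Sum.elim_inl, Sum.elim_inr]; ring
    rw [Finset.sum_congr rfl (fun x _ => this x),
      D.flag_sum (fun p' c' => (if p' = q then (1:R) else 0) * (if c' = c.1 then 1 else 0))]
    have hinner : ∀ p' : D.P, (∑ c' ∈ D.blocks,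
        if p' ∈ c' then (if p' = q then (1:R) else 0) * (if c' = c.1 then 1 else 0) else 0)
        = (if p' = q then (1:R) else 0) * (if p' ∈ c.1 then 1 else 0) := by
      intro p'
      have hsw : ∀ c' ∈ D.blocks,
          (if p' ∈ c' then (if p' = q then (1:R) else 0) * (if c' = c.1 then 1 else 0) else 0)
          = (if c' = c.1 then (if p' = q then (1:R) else 0) * (if p' ∈ c' then 1 else 0)
              else 0) := by
        intro c' _
        split_ifs <;> ring
      rw [Finset.sum_congr rfl hsw, Finset.sum_ite_eq' D.blocks c.1, if_pos c.2]
    rw [Finset.sum_congr rfl (fun p' _ => hinner p')]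
    have h2 : ∀ p' : D.P, (if p' = q then (1:R) else 0) * (if p' ∈ c.1 then 1 else 0)
        = if p' = q then (if p' ∈ c.1 then (1:R) else 0) else 0 := by
      intro p'; split_ifs <;> ring
    rw [Finset.sum_congr rfl (fun p' _ => h2 p'), Finset.sum_ite_eq' Finset.univ q,
      if_pos (Finset.mem_univ q)]
    simp [Matrix.fromBlocks, BIBD.N]
  · -- (inr c, inr d)
    have : ∀ x : D.Flag, D.M R x (Sum.inr c) * D.M R x (Sum.inr d)
        = (if x.1.2 = c.1 then (1:R) else 0) * (if x.1.2 = d.1 then 1 else 0) := fun _ => rfl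
    rw [Finset.sum_congr rfl (fun x _ => this x),
      D.flag_sum (fun p' c' => (if c' = c.1 then (1:R) else 0) * (if c' = d.1 then 1 else 0)),
      Finset.sum_comm]
    have hinner : ∀ c' ∈ D.blocks, (∑ p' : D.P,
        if p' ∈ c' then (if c' = c.1 then (1:R) else 0) * (if c' = d.1 then 1 else 0) else 0)
        = (k:R) * ((if c' = c.1 then (1:R) else 0) * (if c' = d.1 then 1 else 0)) := by
      intro c' hc'
      rw [← Finset.sum_filter, Finset.sum_const, Finset.filter_univ_mem,
        D.block_size c' hc', nsmul_eq_mul]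
    rw [Finset.sum_congr rfl hinner, ← Finset.mul_sum]
    have h3 : ∀ c' ∈ D.blocks, (if c' = c.1 then (1:R) else 0) * (if c' = d.1 then 1 else 0)
        = if c' = c.1 then (if c' = d.1 then (1:R) else 0) else 0 := by
      intro c' _; split_ifs <;> ring
    rw [Finset.sum_congr rfl h3, Finset.sum_ite_eq' D.blocks c.1, if_pos c.2]
    by_cases h : c = d
    · subst h; simp [Matrix.fromBlocks, Matrix.one_apply]
    · have h' : c.1 ≠ d.1 := fun he => h (Subtype.ext he)
      simp [Matrix.fromBlocks, Matrix.one_apply, h, h']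

lemma BIBD.N_mul_Nt (D : BIBD v v k k lam) :
    D.N R * (D.N R)ᵀ
      = ((k:R) - (lam:R)) • 1 + (lam:R) • Matrix.of (fun _ _ => (1:R)) := by
  classical
  ext p q
  rw [Matrix.mul_apply]
  have h1 : ∀ c : {c : Finset D.P // c ∈ D.blocks},
      D.N R p c * (D.N R)ᵀ c q = if p ∈ c.1 ∧ q ∈ c.1 then (1:R) else 0 := by
    intro c
    simp only [BIBD.N, Matrix.transpose_apply, Matrix.of_apply, ite_and, ite_mul, one_mul,
      zero_mul]
  rw [Finset.sum_congr rfl (fun c _ => h1 c),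
    ← Finset.sum_subtype (p := fun c => c ∈ D.blocks) D.blocks (fun _ => Iff.rfl)
      (fun c => if p ∈ c ∧ q ∈ c then (1:R) else 0),
    ← Finset.sum_filter, Finset.sum_const, nsmul_eq_mul, mul_one]
  by_cases h : p = q
  · subst h
    have : D.blocks.filter (fun c => p ∈ c ∧ p ∈ c) = D.blocks.filter (fun c => p ∈ c) := by
      apply Finset.filter_congr; intro c _; simp
    rw [this, D.point_deg p]
    simp [Matrix.one_apply]
  · rw [D.pair_deg p q h]
    simp [Matrix.one_apply, h]

end Matrices

section DetAux
open Matrix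

variable {K : Type} [Field K] {m n : Type} [Fintype m] [Fintype n]
  [DecidableEq m] [DecidableEq n]

lemma det_aux1 (a : K) (ha : a ≠ 0) (A : Matrix m n K) (B : Matrix n m K) :
    a ^ Fintype.card n * Matrix.det (a • (1 : Matrix m m K) - A * B)
      = a ^ Fintype.card m * Matrix.det (a • (1 : Matrix n n K) - B * A) := by
  have h1 : a • (1 : Matrix m m K) - A * B = a • (1 - (a⁻¹ • A) * B) := by
    rw [smul_sub, Matrix.smul_mul, smul_smul, mul_inv_cancel₀ ha, one_smul]
  have h2 : a • (1 : Matrix n n K) - B * A = a • (1 - B * (a⁻¹ • A)) := by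
    rw [smul_sub, Matrix.mul_smul, smul_smul, mul_inv_cancel₀ ha, one_smul]
  rw [h1, h2, Matrix.det_smul, Matrix.det_smul, Matrix.det_one_sub_mul_comm]
  ring

lemma det_aux2 (s : K) (hs : s ≠ 0) (hcard : Fintype.card n = Fintype.card m)
    (N : Matrix n m K) :
    Matrix.det (Matrix.fromBlocks (s • 1) (-N) (-Nᵀ) (s • (1 : Matrix m m K)))
      = Matrix.det ((s ^ 2) • (1 : Matrix n n K) - N * Nᵀ) := by
  letI : Invertible (s • (1 : Matrix m m K)) :=
    ⟨s⁻¹ • 1, by rw [Matrix.smul_mul, Matrix.mul_smul, smul_smul, inv_mul_cancel₀ hs,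
        Matrix.mul_one, one_smul], by
      rw [Matrix.smul_mul, Matrix.mul_smul, smul_smul, mul_inv_cancel₀ hs,
        Matrix.mul_one, one_smul]⟩
  rw [Matrix.det_fromBlocks₂₂]
  have hinv : (⅟ (s • (1 : Matrix m m K)) : Matrix m m K) = s⁻¹ • 1 := rfl
  rw [hinv]
  have h3 : (-N) * (s⁻¹ • (1 : Matrix m m K)) * (-Nᵀ) = s⁻¹ • (N * Nᵀ) := by
    rw [Matrix.mul_smul, Matrix.mul_one, Matrix.smul_mul, Matrix.neg_mul, Matrix.mul_neg,
      neg_neg]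
  rw [h3]
  have h4 : s • (1 : Matrix n n K) - s⁻¹ • (N * Nᵀ)
      = s⁻¹ • ((s ^ 2) • (1 : Matrix n n K) - N * Nᵀ) := by
    rw [smul_sub, smul_smul]
    congr 2
    field_simp
  rw [h4, Matrix.det_smul, Matrix.det_smul, Matrix.det_one, mul_one, ← mul_assoc,
    hcard, ← mul_pow, mul_inv_cancel₀ hs, one_pow, one_mul]

lemma det_aux3 [Nonempty n] (y c : K) (hy : y ≠ 0) :
    Matrix.det (y • (1 : Matrix n n K) + c • Matrix.of (fun _ _ => (1:K)))
      = y ^ (Fintype.card n - 1) * (y + (Fintype.card n : K) * c) := by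
  have hJ : c • Matrix.of (fun _ _ : n => (1:K))
      = Matrix.replicateCol (Fin 1) (fun _ => c) * Matrix.replicateRow (Fin 1) (fun _ => (1:K)) := by
    ext i j
    simp [Matrix.replicateCol, Matrix.replicateRow, Matrix.mul_apply]
  have h1 : y • (1 : Matrix n n K) + c • Matrix.of (fun _ _ : n => (1:K))
      = y • (1 + Matrix.replicateCol (Fin 1) (fun _ => y⁻¹ * c) * Matrix.replicateRow (Fin 1) (fun _ => (1:K))) := by
    rw [smul_add, hJ]
    congr 1
    ext i j
    simp [Matrix.replicateCol, Matrix.replicateRow, Matrix.mul_apply]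
    field_simp
  rw [h1, Matrix.det_smul]
  erw [Matrix.det_one_add_replicateCol_mul_replicateRow (ι := Fin 1)]
  have hd : (fun _ : n => (1:K)) ⬝ᵥ (fun _ => y⁻¹ * c) = (Fintype.card n : K) * (y⁻¹ * c) := by
    simp [dotProduct, Finset.sum_const, nsmul_eq_mul]
  rw [hd]
  have hcard : Fintype.card n = (Fintype.card n - 1) + 1 :=
    (Nat.succ_pred_eq_of_pos Fintype.card_pos).symm
  rw [hcard, pow_succ, Nat.add_sub_cancel]
  field_simp

end DetAux


set_option maxHeartbeats 1000000 in
open Polynomial Matrix in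
/-- The characteristic polynomial of the adjacency matrix of the flag-graph `Γ₁(D)` of a
non-trivial `(v,k,λ)`-symmetric design with `λ < k` is
`(X - (2k-2))·(X - (k-2+√(k-λ)))^(v-1)·(X - (k-2-√(k-λ)))^(v-1)·(X + 2)^(vk-2v+1)`. -/
theorem flagGraph_symmetric_adjMatrix_charpoly (D : BIBD v v k k lam)
    (hnt : 1 < v - k) (hlk : lam < k) :
    (D.Gamma1.adjMatrix ℝ).charpoly =
      (Polynomial.X - Polynomial.C (2 * (k : ℝ) - 2)) *
      (Polynomial.X -
        Polynomial.C ((k : ℝ) - 2 + Real.sqrt ((k : ℝ) - (lam : ℝ)))) ^ (v - 1) *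
      (Polynomial.X -
        Polynomial.C ((k : ℝ) - 2 - Real.sqrt ((k : ℝ) - (lam : ℝ)))) ^ (v - 1) *
      (Polynomial.X + Polynomial.C 2) ^ (v * k - 2 * v + 1) := by
  classical
  -- basic numerology
  have hk2 : 2 ≤ k := D.one_lt_k
  have hkv : k < v := D.k_lt_v
  have hv1 : 1 ≤ v := le_of_lt (lt_of_le_of_lt (Nat.le_of_lt_succ (Nat.lt_succ_of_lt D.one_lt_k)) hkv)
  have h2v : 2 * v ≤ v * k := by
    calc 2 * v = v * 2 := by ring
    _ ≤ v * k := Nat.mul_le_mul_left v hk2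
  set K := FractionRing (Polynomial ℝ) with hK
  let φ : Polynomial ℝ →+* K := algebraMap (Polynomial ℝ) K
  have hφ : Function.Injective φ := IsFractionRing.injective (Polynomial ℝ) K
  let ψ : ℝ →+* K := φ.comp (Polynomial.C : ℝ →+* Polynomial ℝ)
  set t : K := φ Polynomial.X with ht
  have hφC : ∀ r : ℝ, φ (Polynomial.C r) = ψ r := fun r => rfl
  have hφne : ∀ pp : Polynomial ℝ, pp ≠ 0 → φ pp ≠ 0 := by
    intro pp h h0
    exact h (hφ (by rw [h0, map_zero]))
  have hlin : ∀ r : ℝ, φ (Polynomial.X - Polynomial.C r) = t - ψ r := by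
    intro r; rw [map_sub, hφC]
  have hlin_ne : ∀ r : ℝ, t - ψ r ≠ 0 := by
    intro r
    rw [← hlin r]
    exact hφne _ (Polynomial.X_sub_C_ne_zero r)
  -- cardinalities
  have hBl : Fintype.card {c : Finset D.P // c ∈ D.blocks} = v := by
    have h1 : Fintype.card {c : Finset D.P // c ∈ D.blocks} = Fintype.card ↥D.blocks :=
      Fintype.card_congr (Equiv.refl _)
    rw [h1, Fintype.card_coe, D.card_blocks]
  have hcardP : Fintype.card D.P = v := D.card_points
  have hcard_flag : Fintype.card D.Flag = v * k := D.card_flag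
  have hcard_sum : Fintype.card (D.P ⊕ {c : Finset D.P // c ∈ D.blocks}) = 2 * v := by
    rw [Fintype.card_sum, hBl, hcardP]; ring
  -- the scalars
  have hknn : (0:ℝ) ≤ (k:ℝ) - (lam:ℝ) := by
    have : (lam:ℝ) ≤ (k:ℝ) := by exact_mod_cast le_of_lt hlk
    linarith
  set w : ℝ := Real.sqrt ((k:ℝ) - (lam:ℝ)) with hw
  set cK : K := ψ w with hcK
  have hw2 : cK ^ 2 = (k:K) - (lam:K) := by
    have hsq : w ^ 2 = (k:ℝ) - (lam:ℝ) := Real.sq_sqrt hknn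
    rw [hcK, ← map_pow, hsq, map_sub, map_natCast, map_natCast]
  have hψ2 : ψ (2:ℝ) = (2:K) := by rw [map_ofNat]
  have hψk : ψ ((k:ℝ)) = (k:K) := map_natCast ψ k
  have hψl : ψ ((lam:ℝ)) = (lam:K) := map_natCast ψ lam
  -- nonzero elements
  have ha : t + 2 ≠ 0 := by
    have : t + 2 = t - ψ (-2 : ℝ) := by rw [map_neg, hψ2]; ring
    rw [this]; exact hlin_ne _
  have hs_ne : t + 2 - (k:K) ≠ 0 := by
    have : t + 2 - (k:K) = t - ψ ((k:ℝ) - 2) := by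
      rw [map_sub, hψ2, hψk]; ring
    rw [this]; exact hlin_ne _
  set s : K := t + 2 - (k:K) with hs
  have hsc1 : s - cK = t - ψ ((k:ℝ) - 2 + w) := by
    rw [map_add, map_sub, hψ2, hψk, hs, hcK]; ring
  have hsc2 : s + cK = t - ψ ((k:ℝ) - 2 - w) := by
    rw [map_sub, map_sub, hψ2, hψk, hs, hcK]; ring
  have hsc1_ne : s - cK ≠ 0 := by rw [hsc1]; exact hlin_ne _
  have hsc2_ne : s + cK ≠ 0 := by rw [hsc2]; exact hlin_ne _
  set y : K := (s - cK) * (s + cK) with hy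
  have hy_ne : y ≠ 0 := mul_ne_zero hsc1_ne hsc2_ne
  have hy_eq : y = s^2 - ((k:K) - (lam:K)) := by rw [hy, ← hw2]; ring
  -- the count identity in K
  have hcountK : (lam:K) * ((v:K) - 1) = (k:K) * ((k:K) - 1) := by
    have h := D.symmetric_count
    have : ((lam * (v-1) : ℕ) : K) = ((k * (k-1) : ℕ) : K) := by rw [h]
    rw [Nat.cast_mul, Nat.cast_mul, Nat.cast_sub hv1, Nat.cast_sub (le_of_lt D.one_lt_k),
      Nat.cast_one] at this
    exact this
  -- charpoly as a determinant over K
  apply hφ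
  rw [show (D.Gamma1.adjMatrix ℝ).charpoly = ((D.Gamma1.adjMatrix ℝ).charmatrix).det from rfl]
  rw [RingHom.map_det]
  have hmat : ((D.Gamma1.adjMatrix ℝ).charmatrix).map φ
      = (t + 2) • (1 : Matrix D.Flag D.Flag K) - D.M K * (D.M K)ᵀ := by
    ext x z
    rw [Matrix.map_apply, Matrix.charmatrix_apply, Matrix.sub_apply, Matrix.smul_apply,
      Matrix.one_apply, smul_eq_mul, map_sub, D.M_mul_Mt_apply K x z, hφC,
      SimpleGraph.adjMatrix_apply]
    have hadj : D.Gamma1.Adj x z ↔ (x ≠ z ∧ (x.1.1 = z.1.1 ∨ x.1.2 = z.1.2)) := Iff.rfl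
    by_cases hxz : x = z
    · subst hxz
      rw [Matrix.diagonal_apply_eq, if_pos rfl, if_pos rfl, if_pos rfl]
      have : ¬ D.Gamma1.Adj x x := D.Gamma1.loopless.irrefl x
      rw [if_neg this, map_zero]
      simp only [← ht]
      ring
    · rw [Matrix.diagonal_apply_ne _ hxz, if_neg hxz, map_zero]
      by_cases h1 : x.1.1 = z.1.1 <;> by_cases h2 : x.1.2 = z.1.2
      · exact absurd (Subtype.ext (Prod.ext h1 h2)) hxz
      · have : D.Gamma1.Adj x z := ⟨hxz, Or.inl h1⟩
        rw [if_pos this, _root_.map_one, if_pos h1, if_neg h2]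
        ring
      · have : D.Gamma1.Adj x z := ⟨hxz, Or.inr h2⟩
        rw [if_pos this, _root_.map_one, if_neg h1, if_pos h2]
        ring
      · have : ¬ D.Gamma1.Adj x z := by
          intro hcon
          rcases hcon.2 with h | h
          exacts [h1 h, h2 h]
        rw [if_neg this, map_zero, if_neg h1, if_neg h2]
        ring
  rw [RingHom.mapMatrix_apply, hmat]
  -- Weinstein–Aronszajn step
  have step1 : ((t + 2) • (1 : Matrix D.Flag D.Flag K) - D.M K * (D.M K)ᵀ).det
      = (t+2)^(v*k - 2*v) *
        ((t + 2) • (1 : Matrix (D.P ⊕ {c : Finset D.P // c ∈ D.blocks}) _ K)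
          - (D.M K)ᵀ * D.M K).det := by
    have h := det_aux1 (t+2) ha (D.M K) ((D.M K)ᵀ)
    rw [hcard_sum, hcard_flag] at h
    have hsplit : (t+2)^(v*k) = (t+2)^(v*k-2*v) * (t+2)^(2*v) := by
      rw [← pow_add, Nat.sub_add_cancel h2v]
    rw [hsplit] at h
    apply mul_left_cancel₀ (pow_ne_zero (2*v) ha)
    rw [h]; ring
  rw [step1]
  -- Schur complement step
  have hblocks : (t + 2) • (1 : Matrix (D.P ⊕ {c : Finset D.P // c ∈ D.blocks}) _ K)
      - (D.M K)ᵀ * D.M K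
      = Matrix.fromBlocks (s • 1) (-(D.N K)) (-(D.N K)ᵀ) (s • 1) := by
    rw [D.Mt_mul_M K]
    ext i j
    rcases i with p | c <;> rcases j with q | d <;>
      simp only [Matrix.sub_apply, Matrix.smul_apply, Matrix.one_apply,
        Matrix.fromBlocks_apply₁₁, Matrix.fromBlocks_apply₁₂, Matrix.fromBlocks_apply₂₁,
        Matrix.fromBlocks_apply₂₂, Matrix.neg_apply, smul_eq_mul, Sum.inl.injEq,
        Sum.inr.injEq, reduceCtorEq, if_false, Subtype.mk.injEq, hs] <;>
      first
      | (split_ifs <;> ring)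
      | ring
  rw [hblocks, det_aux2 s hs_ne (by rw [hcardP, hBl]) (D.N K)]
  -- rank-one perturbation step
  have hNN : (s^2) • (1 : Matrix D.P D.P K) - D.N K * (D.N K)ᵀ
      = y • 1 + (-(lam:K)) • Matrix.of (fun _ _ => (1:K)) := by
    rw [D.N_mul_Nt K, hy_eq]
    ext p q
    simp only [Matrix.sub_apply, Matrix.add_apply, Matrix.smul_apply, Matrix.one_apply,
      Matrix.of_apply, smul_eq_mul]
    split_ifs <;> ring
  haveI : Nonempty D.P := by
    rw [← Fintype.card_pos_iff, hcardP]; omega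
  rw [hNN, det_aux3 y (-(lam:K)) hy_ne, hcardP]
  -- final arithmetic
  have hfin : y + (v:K) * (-(lam:K)) = (s - (k:K)) * (s + (k:K)) := by
    rw [hy_eq]
    have : (s - (k:K)) * (s + (k:K)) = s^2 - (k:K)^2 := by ring
    rw [this]
    linear_combination -hcountK
  rw [hfin]
  -- compute φ of the RHS
  have hE4 : φ (Polynomial.X + Polynomial.C 2) = t + 2 := by
    have h0 : Polynomial.X + Polynomial.C (2:ℝ) = Polynomial.X - Polynomial.C (-2 : ℝ) := by
      rw [map_neg, sub_neg_eq_add]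
    rw [h0, hlin, map_neg, hψ2, sub_neg_eq_add]
  have hE1 : φ (Polynomial.X - Polynomial.C (2*(k:ℝ)-2)) = t - (2*(k:K)-2) := by
    rw [hlin, map_sub, _root_.map_mul, hψ2, hψk]
  have hE2 : φ (Polynomial.X - Polynomial.C ((k:ℝ)-2+w)) = s - cK := by
    rw [hlin]; exact hsc1.symm
  have hE3 : φ (Polynomial.X - Polynomial.C ((k:ℝ)-2-w)) = s + cK := by
    rw [hlin]; exact hsc2.symm
  rw [_root_.map_mul, _root_.map_mul, _root_.map_mul, map_pow, map_pow, map_pow,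
    hE1, hE2, hE3, hE4]
  -- combine the two powers on the right
  have hcomb : (t - (2*(k:K)-2)) * (s - cK)^(v-1) * (s + cK)^(v-1)
      = (t - (2*(k:K)-2)) * y^(v-1) := by
    rw [mul_assoc, ← mul_pow, ← hy]
  rw [hcomb, hs]
  have hq : v * k - 2 * v + 1 = (v * k - 2 * v) + 1 := rfl
  rw [hq, pow_succ]
  ring
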